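/- arXiv:2409.04146 — 6 statements merged into one kernel-verified Lean document; each statement's English description precedes it below -/
import Mathlib

section
/- Let d_1, …, d_{n-1} > 0 and z_1, …, z_{n-1} ∈ ℝ. Set m = ⌊(n+1)/2⌋ and let T(z) be the m × (n−m) matrix whose (⌈(i+1)/2⌉, ⌈i/2⌉) entry is d_i z_i for i = 1, …, n−1 and all other entries zero. Define μ ∈ ℝ^m by μ_1 = 1, μ_{k+1} = ∏_{j=1}^{k} d_{2j−1}/d_{2j}, and ν ∈ ℝ^{n−m} by ν_1 = 1, ν_{k+1} = ∏_{j=1}^{k} d_{2j}/d_{2j+1}. Then μ^t T(z) ν = d_1 (z_1 + z_2 + ⋯ + z_{n-1}). -/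
open Matrix
open scoped Matrix.Norms.L2Operator


private lemma sum_ite_lt (f : ℕ → ℝ) (K p : ℕ) (hK : K ≤ p) :
    ∑ c ∈ Finset.range p, (if c < K then f c else 0) = ∑ c ∈ Finset.range K, f c := by
  rw [Finset.sum_ite, Finset.sum_const_zero, add_zero]
  apply Finset.sum_congr _ (fun _ _ => rfl)
  ext c
  simp only [Finset.mem_filter, Finset.mem_range]
  omega

private lemma sum_split (z : ℕ → ℝ) (N : ℕ) :
    ∑ i ∈ Finset.range N, z i
      = (∑ c ∈ Finset.range ((N+1)/2), z (2*c)) + ∑ c ∈ Finset.range (N/2), z (2*c+1) := by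
  induction N with
  | zero => simp
  | succ N ih =>
    rw [Finset.sum_range_succ, ih]
    rcases Nat.even_or_odd N with ⟨q, hq⟩ | ⟨q, hq⟩
    · have h1 : (N+1+1)/2 = (N+1)/2 + 1 := by omega
      have h2 : (N+1)/2 = N/2 := by omega
      have h3 : 2 * (N/2) = N := by omega
      rw [h1, h2, Finset.sum_range_succ, h3]
      ring
    · have h1 : (N+1+1)/2 = (N+1)/2 := by omega
      have h2 : (N+1)/2 = N/2 + 1 := by omega
      have h3 : 2 * (N/2) + 1 = N := by omega
      have hz : z N = z (2*(N/2)+1) := by rw [h3]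
      rw [h1, h2, Finset.sum_range_succ, hz, Finset.sum_range_succ]
      ring

private lemma tele (d : ℕ → ℝ) (N : ℕ) (hd : ∀ i, 1 ≤ i → i ≤ N → d i ≠ 0) :
    ∀ k, 2*k+1 ≤ N → (∏ j ∈ Finset.range k, d (2*j+1) / d (2*j+3)) * d (2*k+1) = d 1 := by
  intro k
  induction k with
  | zero => simp
  | succ k ih =>
    intro hk
    have h3 : d (2*k+3) ≠ 0 := hd _ (by omega) (by omega)
    rw [Finset.prod_range_succ]
    have : (∏ j ∈ Finset.range k, d (2*j+1) / d (2*j+3)) * (d (2*k+1) / d (2*k+3)) * d (2*(k+1)+1)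
        = (∏ j ∈ Finset.range k, d (2*j+1) / d (2*j+3)) * d (2*k+1) := by
      have h4 : 2*(k+1)+1 = 2*k+3 := by ring
      rw [h4, mul_assoc, div_mul_cancel₀ _ h3]
    rw [this, ih (by omega)]

private lemma odd_term (d : ℕ → ℝ) (N : ℕ) (hd : ∀ i, 1 ≤ i → i ≤ N → d i ≠ 0)
    (c : ℕ) (hc : 2*c+1 ≤ N) :
    (∏ j ∈ Finset.range c, d (2*j+1) / d (2*j+2)) *
      (∏ j ∈ Finset.range c, d (2*j+2) / d (2*j+3)) * d (2*c+1) = d 1 := by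
  rw [← Finset.prod_mul_distrib]
  have : ∀ j ∈ Finset.range c, d (2*j+1) / d (2*j+2) * (d (2*j+2) / d (2*j+3))
      = d (2*j+1) / d (2*j+3) := by
    intro j hj
    simp only [Finset.mem_range] at hj
    have h2 : d (2*j+2) ≠ 0 := hd _ (by omega) (by omega)
    field_simp
  rw [Finset.prod_congr rfl this]
  exact tele d N hd c hc

private lemma even_term (d : ℕ → ℝ) (N : ℕ) (hd : ∀ i, 1 ≤ i → i ≤ N → d i ≠ 0)
    (c : ℕ) (hc : 2*c+2 ≤ N) :
    (∏ j ∈ Finset.range (c+1), d (2*j+1) / d (2*j+2)) *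
      (∏ j ∈ Finset.range c, d (2*j+2) / d (2*j+3)) * d (2*c+2) = d 1 := by
  rw [Finset.prod_range_succ]
  have h2 : d (2*c+2) ≠ 0 := hd _ (by omega) (by omega)
  have key := odd_term d N hd c (by omega)
  set P := ∏ j ∈ Finset.range c, d (2*j+1) / d (2*j+2) with hP
  set Q := ∏ j ∈ Finset.range c, d (2*j+2) / d (2*j+3) with hQ
  have h : P * (d (2*c+1) / d (2*c+2)) * Q * d (2*c+2) = P * Q * d (2*c+1) := by
    field_simp
  rw [h]
  exact key

/-- `μᵀ T(z) ν = d₁ (z₁ + ⋯ + z_{n-1})`, where `T(z)` is the lower bidiagonal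
`⌊(n+1)/2⌋ × ⌊n/2⌋` matrix with diagonal `d₁z₁, d₃z₃, …` and subdiagonal `d₂z₂, d₄z₄, …`,
and `μ, ν` are the vectors of products of weight ratios. (All data is 1-indexed.) -/
theorem mu_T_nu_eq {n : ℕ} (hn : 2 ≤ n) (d z : ℕ → ℝ)
    (hd : ∀ i, 1 ≤ i → i ≤ n - 1 → 0 < d i)
    (T : Matrix (Fin ((n + 1) / 2)) (Fin (n - (n + 1) / 2)) ℝ)
    (hT : T = Matrix.of fun (r : Fin ((n + 1) / 2)) (c : Fin (n - (n + 1) / 2)) =>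
      if (r : ℕ) = (c : ℕ) then d (2 * (c : ℕ) + 1) * z (2 * (c : ℕ) + 1)
      else if (r : ℕ) = (c : ℕ) + 1 then d (2 * (c : ℕ) + 2) * z (2 * (c : ℕ) + 2)
      else 0)
    (mu : Fin ((n + 1) / 2) → ℝ)
    (hmu : mu = fun (k : Fin ((n + 1) / 2)) =>
      ∏ j ∈ Finset.range (k : ℕ), d (2 * j + 1) / d (2 * j + 2))
    (nu : Fin (n - (n + 1) / 2) → ℝ)
    (hnu : nu = fun (k : Fin (n - (n + 1) / 2)) =>
      ∏ j ∈ Finset.range (k : ℕ), d (2 * j + 2) / d (2 * j + 3)) :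
    mu ⬝ᵥ T.mulVec nu = d 1 * ∑ i ∈ Finset.Icc 1 (n - 1), z i := by
  subst hT hmu hnu
  simp only [Matrix.mulVec, dotProduct, Matrix.of_apply, Finset.mul_sum]
  have hconv : ∀ (f : ℕ → ℕ → ℝ),
      (∑ r : Fin ((n+1)/2), ∑ c : Fin (n - (n+1)/2), f ↑r ↑c)
        = ∑ r ∈ Finset.range ((n+1)/2), ∑ c ∈ Finset.range (n - (n+1)/2), f r c := by
    intro f
    rw [← Fin.sum_univ_eq_sum_range (fun r => ∑ c ∈ Finset.range (n - (n+1)/2), f r c)]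
    exact Finset.sum_congr rfl fun r _ => Fin.sum_univ_eq_sum_range (fun c => f ↑r c) _
  rw [hconv (fun r c => (∏ j ∈ Finset.range r, d (2*j+1) / d (2*j+2)) *
      ((if r = c then d (2*c+1) * z (2*c+1) else if r = c+1 then d (2*c+2) * z (2*c+2) else 0) *
        ∏ j ∈ Finset.range c, d (2*j+2) / d (2*j+3)))]
  have hdn : ∀ i, 1 ≤ i → i ≤ n - 1 → d i ≠ 0 := fun i h1 h2 => (hd i h1 h2).ne'
  set m := (n+1)/2 with hm
  set p := n - (n+1)/2 with hp
  have point : ∀ c ∈ Finset.range p, ∀ r ∈ Finset.range m,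
      (∏ j ∈ Finset.range r, d (2*j+1) / d (2*j+2)) *
        ((if r = c then d (2*c+1) * z (2*c+1) else if r = c+1 then d (2*c+2) * z (2*c+2) else 0) *
          ∏ j ∈ Finset.range c, d (2*j+2) / d (2*j+3))
      = (if r = c then d 1 * z (2*c+1) else 0) + (if r = c+1 then d 1 * z (2*c+2) else 0) := by
    intro c hc r hr
    rw [Finset.mem_range] at hc hr
    by_cases h1 : r = c
    · subst h1
      rw [if_pos rfl, if_pos rfl, if_neg (by omega : ¬ r = r + 1), add_zero]
      have hA := odd_term d (n-1) hdn r (by omega)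
      linear_combination z (2*r+1) * hA
    · rw [if_neg h1, if_neg h1, zero_add]
      by_cases h2 : r = c+1
      · subst h2
        rw [if_pos rfl, if_pos rfl]
        have hB := even_term d (n-1) hdn c (by omega)
        linear_combination z (2*c+2) * hB
      · rw [if_neg h2, if_neg h2, zero_mul, mul_zero]
  rw [Finset.sum_comm]
  have step : ∀ c ∈ Finset.range p,
      (∑ r ∈ Finset.range m,
        (∏ j ∈ Finset.range r, d (2*j+1) / d (2*j+2)) *
          ((if r = c then d (2*c+1) * z (2*c+1) else if r = c+1 then d (2*c+2) * z (2*c+2) else 0) *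
            ∏ j ∈ Finset.range c, d (2*j+2) / d (2*j+3)))
      = d 1 * z (2*c+1) + (if c < (n-1)/2 then d 1 * z (2*c+2) else 0) := by
    intro c hc
    have hc' : c < p := Finset.mem_range.mp hc
    rw [Finset.sum_congr rfl (point c hc), Finset.sum_add_distrib,
      Finset.sum_ite_eq' (Finset.range m) c (fun _ => d 1 * z (2*c+1)),
      Finset.sum_ite_eq' (Finset.range m) (c+1) (fun _ => d 1 * z (2*c+2))]
    rw [if_pos (Finset.mem_range.mpr (by omega))]
    congr 1
    simp only [Finset.mem_range]
    exact if_congr (by omega) rfl rfl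
  rw [Finset.sum_congr rfl step, Finset.sum_add_distrib,
    sum_ite_lt (fun c => d 1 * z (2*c+2)) ((n-1)/2) p (by omega)]
  have hIcc : Finset.Icc 1 (n-1) = Finset.Ico 1 n := by
    rw [← Finset.Ico_add_one_right_eq_Icc]
    congr 1
    omega
  rw [hIcc, Finset.sum_Ico_eq_sum_range, sum_split (fun i => d 1 * z (1+i)) (n-1)]
  congr 1
  · have hb : (n-1+1)/2 = p := by omega
    rw [hb]
    exact Finset.sum_congr rfl fun c _ => by rw [Nat.add_comm]
  · exact Finset.sum_congr rfl fun c _ => by rw [show 1+(2*c+1) = 2*c+2 by omega]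
end

section
/- Let d_1, …, d_{n-1} > 0 with n ≥ 4, and let 1 < p < n−1. Define μ-type norms: for a tuple f = (f_1, …, f_k) of positive reals, set μ(f) to be the vector with entries μ(f)_1 = 1 and μ(f)_{j+1} = ∏_{i=1}^{j} f_{2i−1}/f_{2i} (for 2j ≤ k), and ν(f) with ν(f)_1 = 1 and ν(f)_{j+1} = ∏_{i=1}^{j} f_{2i}/f_{2i+1} (for 2j+1 ≤ k). Let d = (d_1, …, d_{n-1}), f_1 = (d_1, …, d_{p-1}), f_2 = (d_{p+1}, …, d_{n-1}). Then ‖μ(d)‖·‖ν(d)‖/d_1 ≥ ‖μ(f_1)‖·‖ν(f_1)‖/d_1 + ‖μ(f_2)‖·‖ν(f_2)‖/d_{p+1}. -/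
open Finset Real


/-- The Euclidean norm of the vector `μ(f)` associated to a tuple `f₁, …, f_k` of
weights (`f` is 1-indexed): `μ(f)₁ = 1`, `μ(f)_{j+1} = ∏_{i=1}^{j} f_{2i-1}/f_{2i}`. -/
noncomputable def muNorm (k : ℕ) (f : ℕ → ℝ) : ℝ :=
  Real.sqrt (∑ j ∈ Finset.range ((k + 2) / 2),
    (∏ i ∈ Finset.range j, f (2 * i + 1) / f (2 * i + 2)) ^ 2)

/-- The Euclidean norm of the vector `ν(f)` associated to a tuple `f₁, …, f_k` of
weights (`f` is 1-indexed): `ν(f)₁ = 1`, `ν(f)_{j+1} = ∏_{i=1}^{j} f_{2i}/f_{2i+1}`. -/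
noncomputable def nuNorm (k : ℕ) (f : ℕ → ℝ) : ℝ :=
  Real.sqrt (∑ j ∈ Finset.range ((k + 1) / 2),
    (∏ i ∈ Finset.range j, f (2 * i + 2) / f (2 * i + 3)) ^ 2)


lemma sqrt_cs (x y u v : ℝ) (hx : 0 ≤ x) (hy : 0 ≤ y) (hu : 0 ≤ u) (hv : 0 ≤ v) :
    Real.sqrt x * Real.sqrt y + Real.sqrt u * Real.sqrt v ≤ Real.sqrt (x + u) * Real.sqrt (y + v) := by
  rw [← Real.sqrt_mul hx, ← Real.sqrt_mul hu, ← Real.sqrt_mul (by positivity)]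
  have key : (Real.sqrt (x*y) + Real.sqrt (u*v))^2 ≤ (x+u)*(y+v) := by
    have e1 : Real.sqrt (x*y) * Real.sqrt (u*v) = Real.sqrt (x*v) * Real.sqrt (u*y) := by
      rw [← Real.sqrt_mul (mul_nonneg hx hy), ← Real.sqrt_mul (mul_nonneg hx hv)]
      ring_nf
    nlinarith [sq_nonneg (Real.sqrt (x*v) - Real.sqrt (u*y)),
      Real.sq_sqrt (mul_nonneg hx hv), Real.sq_sqrt (mul_nonneg hu hy),
      Real.sq_sqrt (mul_nonneg hx hy), Real.sq_sqrt (mul_nonneg hu hv)]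
  calc Real.sqrt (x*y) + Real.sqrt (u*v)
      = Real.sqrt ((Real.sqrt (x*y) + Real.sqrt (u*v))^2) := by
        rw [Real.sqrt_sq (by positivity)]
    _ ≤ Real.sqrt ((x+u)*(y+v)) := Real.sqrt_le_sqrt key

lemma split_norm_mul (A B m1 m2 : ℕ) (a b : ℕ → ℝ) (h1 : m1 ≤ A) (h2 : m2 ≤ B) :
    Real.sqrt (∑ j ∈ range m1, a j ^ 2) * Real.sqrt (∑ j ∈ range m2, b j ^ 2)
      + Real.sqrt (∑ j ∈ range (A - m1), a (m1 + j) ^ 2)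
        * Real.sqrt (∑ j ∈ range (B - m2), b (m2 + j) ^ 2)
    ≤ Real.sqrt (∑ j ∈ range A, a j ^ 2) * Real.sqrt (∑ j ∈ range B, b j ^ 2) := by
  obtain ⟨s, rfl⟩ : ∃ s, A = m1 + s := ⟨A - m1, by omega⟩
  obtain ⟨t, rfl⟩ : ∃ t, B = m2 + t := ⟨B - m2, by omega⟩
  simp only [Nat.add_sub_cancel_left, Finset.sum_range_add]
  exact sqrt_cs _ _ _ _ (by positivity) (by positivity) (by positivity) (by positivity)

lemma teleprod (h : ℕ → ℝ) : ∀ m : ℕ, (∀ i, i ≤ m → h i ≠ 0) →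
    (∏ i ∈ range m, h i / h (i + 1)) = h 0 / h m := by
  intro m
  induction m with
  | zero => intro hm; simp [div_self (hm 0 le_rfl)]
  | succ k ih =>
    intro hm
    rw [Finset.prod_range_succ, ih (fun i hi => hm i (by omega))]
    have h0 := hm k (by omega)
    have h1 := hm (k+1) (by omega)
    field_simp


/-- Splitting a path at an interior weight `d_p` does not increase the distance value:
`‖μ(d)‖‖ν(d)‖/d₁ ≥ ‖μ(f₁)‖‖ν(f₁)‖/d₁ + ‖μ(f₂)‖‖ν(f₂)‖/d_{p+1}`, where
`f₁ = (d₁, …, d_{p-1})` and `f₂ = (d_{p+1}, …, d_{n-1})`. -/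
theorem splitting_inequality {n : ℕ} (hn : 4 ≤ n) (d : ℕ → ℝ)
    (hd : ∀ i, 1 ≤ i → i ≤ n - 1 → 0 < d i)
    (p : ℕ) (hp1 : 1 < p) (hp2 : p < n - 1) :
    muNorm (p - 1) d * nuNorm (p - 1) d / d 1
        + muNorm (n - 1 - p) (fun i => d (p + i)) * nuNorm (n - 1 - p) (fun i => d (p + i))
          / d (p + 1)
      ≤ muNorm (n - 1) d * nuNorm (n - 1) d / d 1 := by
  have hd1 : 0 < d 1 := hd 1 le_rfl (by omega)
  have hdp1 : 0 < d (p + 1) := hd (p + 1) (by omega) (by omega)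
  -- the two sequences of partial products
  set a : ℕ → ℝ := fun j => ∏ i ∈ range j, d (2 * i + 1) / d (2 * i + 2) with ha
  set b : ℕ → ℝ := fun j => ∏ i ∈ range j, d (2 * i + 2) / d (2 * i + 3) with hb
  have hapos : ∀ m : ℕ, 2 * m ≤ n - 1 → 0 < a m := by
    intro m hm
    apply Finset.prod_pos
    intro i hi
    simp only [Finset.mem_range] at hi
    exact div_pos (hd _ (by omega) (by omega)) (hd _ (by omega) (by omega))
  have hbpos : ∀ m : ℕ, 2 * m + 1 ≤ n - 1 → 0 < b m := by
    intro m hm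
    apply Finset.prod_pos
    intro i hi
    simp only [Finset.mem_range] at hi
    exact div_pos (hd _ (by omega) (by omega)) (hd _ (by omega) (by omega))
  have tele : ∀ m : ℕ, 2 * m + 1 ≤ n - 1 → a m * b m = d 1 / d (2 * m + 1) := by
    intro m hm
    have e : a m * b m = ∏ i ∈ range m, d (2 * i + 1) / d (2 * i + 3) := by
      rw [ha, hb, ← Finset.prod_mul_distrib]
      apply Finset.prod_congr rfl
      intro i hi
      simp only [Finset.mem_range] at hi
      have h2 : d (2 * i + 2) ≠ 0 := ne_of_gt (hd _ (by omega) (by omega))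
      field_simp
    rw [e]
    have := teleprod (fun i => d (2 * i + 1)) m
      (fun i hi => ne_of_gt (hd _ (by omega) (by omega)))
    simpa [show ∀ x : ℕ, 2 * (x + 1) + 1 = 2 * x + 3 from fun x => by ring] using this
  obtain ⟨m, hm | hm⟩ := Nat.even_or_odd' p
  · -- p = 2 m
    have hm1 : 1 ≤ m := by omega
    have ham : 0 < a m := hapos m (by omega)
    have hbm : 0 < b m := hbpos m (by omega)
    have htel : a m * b m = d 1 / d (p + 1) := by
      rw [tele m (by omega)]; congr 2; omega
    simp only [muNorm, nuNorm]
    rw [show (p - 1 + 2) / 2 = m from by omega, show (p - 1 + 1) / 2 = m from by omega,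
        show (n - 1 - p + 2) / 2 = (n + 1) / 2 - m from by omega,
        show (n - 1 - p + 1) / 2 = n / 2 - m from by omega,
        show (n - 1 + 2) / 2 = (n + 1) / 2 from by omega,
        show (n - 1 + 1) / 2 = n / 2 from by omega]
    have E1 : ∑ j ∈ range ((n + 1) / 2 - m), a (m + j) ^ 2
        = a m ^ 2 * ∑ j ∈ range ((n + 1) / 2 - m),
            (∏ i ∈ range j, d (p + (2 * i + 1)) / d (p + (2 * i + 2))) ^ 2 := by
      rw [Finset.mul_sum]
      apply Finset.sum_congr rfl
      intro j _
      rw [← mul_pow]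
      congr 1
      show (∏ i ∈ range (m + j), d (2 * i + 1) / d (2 * i + 2))
          = (∏ i ∈ range m, d (2 * i + 1) / d (2 * i + 2))
            * ∏ i ∈ range j, d (p + (2 * i + 1)) / d (p + (2 * i + 2))
      rw [Finset.prod_range_add]
      congr 1
      apply Finset.prod_congr rfl
      intro i _
      rw [show 2 * (m + i) + 1 = p + (2 * i + 1) from by omega,
          show 2 * (m + i) + 2 = p + (2 * i + 2) from by omega]
    have E2 : ∑ j ∈ range (n / 2 - m), b (m + j) ^ 2
        = b m ^ 2 * ∑ j ∈ range (n / 2 - m),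
            (∏ i ∈ range j, d (p + (2 * i + 2)) / d (p + (2 * i + 3))) ^ 2 := by
      rw [Finset.mul_sum]
      apply Finset.sum_congr rfl
      intro j _
      rw [← mul_pow]
      congr 1
      show (∏ i ∈ range (m + j), d (2 * i + 2) / d (2 * i + 3))
          = (∏ i ∈ range m, d (2 * i + 2) / d (2 * i + 3))
            * ∏ i ∈ range j, d (p + (2 * i + 2)) / d (p + (2 * i + 3))
      rw [Finset.prod_range_add]
      congr 1
      apply Finset.prod_congr rfl
      intro i _
      rw [show 2 * (m + i) + 2 = p + (2 * i + 2) from by omega,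
          show 2 * (m + i) + 3 = p + (2 * i + 3) from by omega]
    have H := split_norm_mul ((n + 1) / 2) (n / 2) m m a b (by omega) (by omega)
    rw [E1, E2, Real.sqrt_mul (sq_nonneg _), Real.sqrt_mul (sq_nonneg _),
        Real.sqrt_sq ham.le, Real.sqrt_sq hbm.le] at H
    set Sμ2 := ∑ j ∈ range ((n + 1) / 2 - m),
        (∏ i ∈ range j, d (p + (2 * i + 1)) / d (p + (2 * i + 2))) ^ 2 with hSμ2
    set Sν2 := ∑ j ∈ range (n / 2 - m),
        (∏ i ∈ range j, d (p + (2 * i + 2)) / d (p + (2 * i + 3))) ^ 2 with hSν2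
    have e3 : Real.sqrt Sμ2 * Real.sqrt Sν2 / d (p + 1)
        = a m * Real.sqrt Sμ2 * (b m * Real.sqrt Sν2) / d 1 := by
      rw [show a m * Real.sqrt Sμ2 * (b m * Real.sqrt Sν2)
            = a m * b m * (Real.sqrt Sμ2 * Real.sqrt Sν2) from by ring, htel]
      field_simp
    rw [e3, ← add_div]
    gcongr
  · -- p = 2 m + 1
    have hm1 : 1 ≤ m := by omega
    have ham : 0 < a (m + 1) := hapos (m + 1) (by omega)
    have hbm : 0 < b m := hbpos m (by omega)
    have htel : a (m + 1) * b m = d 1 / d (p + 1) := by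
      have h1 : a (m + 1) = a m * (d (2 * m + 1) / d (2 * m + 2)) := by
        rw [ha]; exact Finset.prod_range_succ _ m
      rw [h1, show a m * (d (2 * m + 1) / d (2 * m + 2)) * b m
            = a m * b m * (d (2 * m + 1) / d (2 * m + 2)) from by ring,
          tele m (by omega)]
      have h2 : d (2 * m + 1) ≠ 0 := ne_of_gt (hd _ (by omega) (by omega))
      rw [show p + 1 = 2 * m + 2 from by omega]
      field_simp
    simp only [muNorm, nuNorm]
    rw [show (p - 1 + 2) / 2 = m + 1 from by omega, show (p - 1 + 1) / 2 = m from by omega,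
        show (n - 1 - p + 2) / 2 = n / 2 - m from by omega,
        show (n - 1 - p + 1) / 2 = (n + 1) / 2 - (m + 1) from by omega,
        show (n - 1 + 2) / 2 = (n + 1) / 2 from by omega,
        show (n - 1 + 1) / 2 = n / 2 from by omega]
    have E1 : ∑ j ∈ range ((n + 1) / 2 - (m + 1)), a (m + 1 + j) ^ 2
        = a (m + 1) ^ 2 * ∑ j ∈ range ((n + 1) / 2 - (m + 1)),
            (∏ i ∈ range j, d (p + (2 * i + 2)) / d (p + (2 * i + 3))) ^ 2 := by
      rw [Finset.mul_sum]
      apply Finset.sum_congr rfl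
      intro j _
      rw [← mul_pow]
      congr 1
      show (∏ i ∈ range (m + 1 + j), d (2 * i + 1) / d (2 * i + 2))
          = (∏ i ∈ range (m + 1), d (2 * i + 1) / d (2 * i + 2))
            * ∏ i ∈ range j, d (p + (2 * i + 2)) / d (p + (2 * i + 3))
      rw [Finset.prod_range_add]
      congr 1
      apply Finset.prod_congr rfl
      intro i _
      rw [show 2 * (m + 1 + i) + 1 = p + (2 * i + 2) from by omega,
          show 2 * (m + 1 + i) + 2 = p + (2 * i + 3) from by omega]
    have E2 : ∑ j ∈ range (n / 2 - m), b (m + j) ^ 2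
        = b m ^ 2 * ∑ j ∈ range (n / 2 - m),
            (∏ i ∈ range j, d (p + (2 * i + 1)) / d (p + (2 * i + 2))) ^ 2 := by
      rw [Finset.mul_sum]
      apply Finset.sum_congr rfl
      intro j _
      rw [← mul_pow]
      congr 1
      show (∏ i ∈ range (m + j), d (2 * i + 2) / d (2 * i + 3))
          = (∏ i ∈ range m, d (2 * i + 2) / d (2 * i + 3))
            * ∏ i ∈ range j, d (p + (2 * i + 1)) / d (p + (2 * i + 2))
      rw [Finset.prod_range_add]
      congr 1
      apply Finset.prod_congr rfl
      intro i _
      rw [show 2 * (m + i) + 2 = p + (2 * i + 1) from by omega,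
          show 2 * (m + i) + 3 = p + (2 * i + 2) from by omega]
    have H := split_norm_mul ((n + 1) / 2) (n / 2) (m + 1) m a b (by omega) (by omega)
    rw [E1, E2, Real.sqrt_mul (sq_nonneg _), Real.sqrt_mul (sq_nonneg _),
        Real.sqrt_sq ham.le, Real.sqrt_sq hbm.le] at H
    set Sμ2 := ∑ j ∈ range (n / 2 - m),
        (∏ i ∈ range j, d (p + (2 * i + 1)) / d (p + (2 * i + 2))) ^ 2 with hSμ2
    set Sν2 := ∑ j ∈ range ((n + 1) / 2 - (m + 1)),
        (∏ i ∈ range j, d (p + (2 * i + 2)) / d (p + (2 * i + 3))) ^ 2 with hSν2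
    have e3 : Real.sqrt Sμ2 * Real.sqrt Sν2 / d (p + 1)
        = a (m + 1) * Real.sqrt Sν2 * (b m * Real.sqrt Sμ2) / d 1 := by
      rw [show a (m + 1) * Real.sqrt Sν2 * (b m * Real.sqrt Sμ2)
            = a (m + 1) * b m * (Real.sqrt Sμ2 * Real.sqrt Sν2) from by ring, htel]
      field_simp
    rw [e3, ← add_div]
    gcongr
end

section
/- For n = 3 and d_1, d_2 > 0, let D ∈ M_3(ℝ) be the symmetric tridiagonal matrix with zero diagonal and superdiagonal (d_1, d_2). Then max{a_1 − a_3 : A = diag(a_1,a_2,a_3), ‖AD − DA‖ ≤ 1} = (1/d_1)·√(1 + (d_1/d_2)²) = √(d_1² + d_2²)/(d_1 d_2), and the maximum is attained at z = (z_1, z_2) = (d_2/(d_1√(d_1²+d_2²)), d_1/(d_2√(d_1²+d_2²))), i.e. a_1 − a_2 = z_1, a_2 − a_3 = z_2. -/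
open Matrix
open scoped Matrix.Norms.L2Operator

lemma path3_norm_eq (x y : ℝ) :
    ‖(!![0, x, 0; -x, 0, y; 0, -y, 0] : Matrix (Fin 3) (Fin 3) ℝ)‖
      = Real.sqrt (x ^ 2 + y ^ 2) := by
  set M : Matrix (Fin 3) (Fin 3) ℝ := !![0, x, 0; -x, 0, y; 0, -y, 0] with hM
  apply le_antisymm
  · rw [Matrix.l2_opNorm_def]
    apply ContinuousLinearMap.opNorm_le_bound _ (Real.sqrt_nonneg _)
    intro v
    rw [LinearEquiv.trans_apply, LinearMap.coe_toContinuousLinearMap',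
      Matrix.toEuclideanLin_apply, EuclideanSpace.norm_eq, EuclideanSpace.norm_eq,
      ← Real.sqrt_mul (by positivity)]
    apply Real.sqrt_le_sqrt
    simp only [Fin.sum_univ_three,
      Matrix.mulVec, dotProduct, Real.norm_eq_abs, sq_abs, hM]
    norm_num [Matrix.cons_val_zero, Matrix.cons_val_one, Matrix.head_cons, Matrix.cons_val_two, Matrix.tail_cons]
    nlinarith [sq_nonneg (y * v 0 + x * v 2), sq_nonneg (v 1), sq_nonneg x, sq_nonneg y]
  · have h := Matrix.l2_opNorm_mulVec M (EuclideanSpace.single 1 (1:ℝ))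
    rw [EuclideanSpace.norm_single] at h
    simp only [norm_one, mul_one] at h
    refine le_trans (le_of_eq ?_) h
    rw [EuclideanSpace.norm_eq]
    congr 1
    simp [Fin.sum_univ_three, Matrix.mulVec, dotProduct, hM,
      EuclideanSpace.single_apply, Real.norm_eq_abs, sq_abs]

lemma path3_comm_eq (d₁ d₂ : ℝ) (D : Matrix (Fin 3) (Fin 3) ℝ)
    (hD : D = !![0, d₁, 0; d₁, 0, d₂; 0, d₂, 0]) (a : Fin 3 → ℝ) :
    Matrix.diagonal a * D - D * Matrix.diagonal a =
      !![0, (a 0 - a 1) * d₁, 0;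
         -((a 0 - a 1) * d₁), 0, (a 1 - a 2) * d₂;
         0, -((a 1 - a 2) * d₂), 0] := by
  subst hD
  ext i j
  rw [Matrix.sub_apply, Matrix.diagonal_mul, Matrix.mul_diagonal]
  fin_cases i <;> fin_cases j <;> simp <;> ring

/-- For the path on 3 vertices with weights `d₁, d₂ > 0`, the noncommutative distance
`max{a₁ − a₃ : ‖AD − DA‖ ≤ 1}` equals `(1/d₁)√(1 + (d₁/d₂)²) = √(d₁² + d₂²)/(d₁d₂)`,
attained at `a₁ − a₂ = d₂/(d₁√(d₁²+d₂²))`, `a₂ − a₃ = d₁/(d₂√(d₁²+d₂²))`. -/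
theorem path3_distance (d₁ d₂ : ℝ) (h₁ : 0 < d₁) (h₂ : 0 < d₂)
    (D : Matrix (Fin 3) (Fin 3) ℝ)
    (hD : D = !![0, d₁, 0; d₁, 0, d₂; 0, d₂, 0]) :
    (1 / d₁) * Real.sqrt (1 + (d₁ / d₂) ^ 2) = Real.sqrt (d₁ ^ 2 + d₂ ^ 2) / (d₁ * d₂)
    ∧ IsGreatest {r : ℝ | ∃ a : Fin 3 → ℝ,
        ‖Matrix.diagonal a * D - D * Matrix.diagonal a‖ ≤ 1 ∧ r = a 0 - a 2}
      (Real.sqrt (d₁ ^ 2 + d₂ ^ 2) / (d₁ * d₂))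
    ∧ ∃ a : Fin 3 → ℝ,
        ‖Matrix.diagonal a * D - D * Matrix.diagonal a‖ ≤ 1
        ∧ a 0 - a 1 = d₂ / (d₁ * Real.sqrt (d₁ ^ 2 + d₂ ^ 2))
        ∧ a 1 - a 2 = d₁ / (d₂ * Real.sqrt (d₁ ^ 2 + d₂ ^ 2))
        ∧ a 0 - a 2 = Real.sqrt (d₁ ^ 2 + d₂ ^ 2) / (d₁ * d₂) := by
  set s := Real.sqrt (d₁ ^ 2 + d₂ ^ 2) with hs
  have hspos : 0 < s := Real.sqrt_pos.mpr (by positivity)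
  have hs2 : s ^ 2 = d₁ ^ 2 + d₂ ^ 2 := Real.sq_sqrt (by positivity)
  -- the attaining diagonal
  set a : Fin 3 → ℝ := ![d₂ / (d₁ * s) + d₁ / (d₂ * s), d₁ / (d₂ * s), 0] with ha
  have ha0 : a 0 = d₂ / (d₁ * s) + d₁ / (d₂ * s) := rfl
  have ha1 : a 1 = d₁ / (d₂ * s) := rfl
  have ha2 : a 2 = 0 := rfl
  have hx : (a 0 - a 1) * d₁ = d₂ / s := by
    rw [ha0, ha1]; field_simp; ring
  have hy : (a 1 - a 2) * d₂ = d₁ / s := by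
    rw [ha1, ha2]; field_simp; ring
  have hnorm : ‖Matrix.diagonal a * D - D * Matrix.diagonal a‖ ≤ 1 := by
    rw [path3_comm_eq d₁ d₂ D hD a, path3_norm_eq, hx, hy]
    have : (d₂ / s) ^ 2 + (d₁ / s) ^ 2 = 1 := by
      field_simp
      linear_combination -hs2
    rw [this, Real.sqrt_one]
  have ha02 : a 0 - a 2 = s / (d₁ * d₂) := by
    rw [ha0, ha2]
    field_simp
    linear_combination -hs2
  refine ⟨?_, ⟨⟨a, hnorm, ha02.symm⟩, ?_⟩, a, hnorm, ?_, ?_, ha02⟩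
  · have h : 1 + (d₁ / d₂) ^ 2 = (d₁ ^ 2 + d₂ ^ 2) / d₂ ^ 2 := by
      field_simp; ring
    rw [h, Real.sqrt_div (by positivity), Real.sqrt_sq h₂.le, ← hs]
    field_simp
  · rintro r ⟨b, hb, rfl⟩
    rw [path3_comm_eq d₁ d₂ D hD b, path3_norm_eq] at hb
    set x := (b 0 - b 1) * d₁ with hxdef
    set y := (b 1 - b 2) * d₂ with hydef
    have hxy : x ^ 2 + y ^ 2 ≤ 1 := by
      nlinarith [Real.sq_sqrt (show (0:ℝ) ≤ x ^ 2 + y ^ 2 by positivity),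
        Real.sqrt_nonneg (x ^ 2 + y ^ 2)]
    have hb02 : b 0 - b 2 = x / d₁ + y / d₂ := by
      rw [hxdef, hydef]; field_simp; ring
    rw [hb02, div_add_div _ _ (ne_of_gt h₁) (ne_of_gt h₂), div_le_div_iff₀ (by positivity) (by positivity)]
    have key : x * d₂ + y * d₁ ≤ s := by
      nlinarith [sq_nonneg (x * d₁ - y * d₂), sq_nonneg (x * d₂ + y * d₁ - s),
        sq_nonneg (x * d₂ + y * d₁ + s), hspos.le]
    nlinarith [key, mul_pos h₁ h₂]
  · rw [ha0, ha1]; ring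
  · rw [ha1, ha2]; ring
end

section
/- Let n = 2k be even and let L(z) ∈ M_n(ℝ) be the symmetric tridiagonal matrix with zero diagonal and superdiagonal z_1, …, z_{n-1} (all weights d_j = 1). Then max{z_1 + ⋯ + z_{n-1} : z_j ≥ 0, ‖L(z)‖ ≤ 1} = k, attained at z with z_j = 1 for j odd and z_j = 0 for j even. -/
open Matrix
open scoped Matrix.Norms.L2Operator RealInnerProductSpace

/-- The pair-swap map on `Fin (2*k)`: `2m ↔ 2m+1`. -/
def pairSwap (k : ℕ) (i : Fin (2 * k)) : Fin (2 * k) :=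
  if h : Even (i : ℕ) then
    ⟨(i : ℕ) + 1, by rcases h with ⟨m, hm⟩; omega⟩
  else
    ⟨(i : ℕ) - 1, by omega⟩

lemma pairSwap_val (k : ℕ) (i : Fin (2 * k)) :
    (pairSwap k i : ℕ) = if Even (i : ℕ) then (i : ℕ) + 1 else (i : ℕ) - 1 := by
  unfold pairSwap; split <;> rfl

lemma pairSwap_involutive (k : ℕ) : Function.Involutive (pairSwap k) := by
  intro i
  apply Fin.ext
  rw [pairSwap_val, pairSwap_val]
  rcases Nat.even_or_odd (i : ℕ) with he | ho
  · simp only [if_pos he]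
    rw [if_neg (by simp [Nat.even_add_one, he])]
    omega
  · have hne : ¬ Even (i : ℕ) := by simpa [Nat.not_even_iff_odd] using ho
    rcases ho with ⟨m, hm⟩
    have hev : Even ((i : ℕ) - 1) := ⟨m, by omega⟩
    simp only [if_neg hne]
    rw [if_pos hev]
    omega

/-- `pairSwap` as an equivalence. -/
def pairSwapEquiv (k : ℕ) : Equiv.Perm (Fin (2 * k)) :=
  (pairSwap_involutive k).toPerm

lemma sum_indicator_odd (k : ℕ) :
    ∑ i ∈ Finset.Icc 1 (2 * k - 1), (if Odd i then (1 : ℝ) else 0) = k := by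
  have key : ∀ m : ℕ, ∑ i ∈ Finset.range (2 * m), (if Odd i then (1 : ℝ) else 0) = m := by
    intro m
    induction m with
    | zero => simp
    | succ n ih =>
      have h2 : 2 * (n + 1) = (2 * n + 1) + 1 := by ring
      rw [h2, Finset.sum_range_succ, Finset.sum_range_succ, ih]
      have h3 : Odd (2 * n + 1) := ⟨n, by ring⟩
      have h4 : ¬ Odd (2 * n) := by simp [Nat.not_odd_iff_even, Nat.even_mul]
      rw [if_pos h3, if_neg h4]
      push_cast
      ring
  by_cases hk : k = 0
  · subst hk; simp
  have hIcc : Finset.Icc 1 (2 * k - 1) = Finset.range (2 * k) \ {0} := by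
    ext x
    simp only [Finset.mem_Icc, Finset.mem_sdiff, Finset.mem_range, Finset.mem_singleton]
    omega
  rw [hIcc, Finset.sum_sdiff_eq_sub (by simp [Nat.pos_of_ne_zero hk]), key]
  simp [Finset.filter_singleton, Nat.odd_iff]

lemma entry_eq (k : ℕ) (i j : Fin (2 * k)) :
    (if (i : ℕ) + 1 = (j : ℕ) then (if Odd ((i : ℕ) + 1) then (1 : ℝ) else 0)
      else if (j : ℕ) + 1 = (i : ℕ) then (if Odd ((j : ℕ) + 1) then (1 : ℝ) else 0) else 0)
    = if j = pairSwap k i then 1 else 0 := by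
  have hs := pairSwap_val k i
  rcases Nat.even_or_odd (i : ℕ) with he | ho
  · rw [if_pos he] at hs
    have hodd : Odd ((i : ℕ) + 1) := Even.add_one he
    by_cases hj : (j : ℕ) = (i : ℕ) + 1
    · rw [if_pos hj.symm, if_pos hodd, if_pos (Fin.ext (by omega))]
    · have hne : j ≠ pairSwap k i := by
        intro h; apply hj; rw [h, hs]
      rw [if_neg (fun h => hj h.symm), if_neg hne]
      by_cases h2 : (j : ℕ) + 1 = (i : ℕ)
      · rcases he with ⟨m, hm⟩
        rw [if_pos h2, if_neg (by rintro ⟨l, hl⟩; omega)]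
      · rw [if_neg h2]
  · have hnev : ¬ Even (i : ℕ) := by simpa [Nat.not_even_iff_odd] using ho
    rw [if_neg hnev] at hs
    rcases ho with ⟨m, hm⟩
    by_cases hj : (j : ℕ) = (i : ℕ) - 1
    · have h1 : ¬ ((i : ℕ) + 1 = (j : ℕ)) := by omega
      have h2 : (j : ℕ) + 1 = (i : ℕ) := by omega
      have h3 : Odd ((j : ℕ) + 1) := ⟨m, by omega⟩
      have h4 : j = pairSwap k i := Fin.ext (by omega)
      rw [if_neg h1, if_pos h2, if_pos h3, if_pos h4]
    · have hne : j ≠ pairSwap k i := by intro h; apply hj; rw [h, hs]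
      rw [if_neg hne]
      by_cases h1 : (i : ℕ) + 1 = (j : ℕ)
      · rw [if_pos h1, if_neg (by rintro ⟨l, hl⟩; omega)]
      · rw [if_neg h1, if_neg (by omega)]

lemma mulVec_pairSwap {k : ℕ} {A : Matrix (Fin (2 * k)) (Fin (2 * k)) ℝ}
    (hA : ∀ i j, A i j = if j = pairSwap k i then 1 else 0)
    (x : Fin (2 * k) → ℝ) (i : Fin (2 * k)) :
    (A *ᵥ x) i = x (pairSwap k i) := by
  simp only [mulVec, dotProduct, hA, ite_mul, one_mul, zero_mul]
  rw [Finset.sum_ite_eq' Finset.univ (pairSwap k i) x]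
  simp

lemma norm_pairSwap_le (k : ℕ) (A : Matrix (Fin (2 * k)) (Fin (2 * k)) ℝ)
    (hA : ∀ i j, A i j = if j = pairSwap k i then 1 else 0) : ‖A‖ ≤ 1 := by
  rw [Matrix.l2_opNorm_def]
  refine ContinuousLinearMap.opNorm_le_bound _ zero_le_one fun x => ?_
  rw [one_mul]
  have hx : (Matrix.toEuclideanLin.trans LinearMap.toContinuousLinearMap) A x
      = (WithLp.equiv 2 (Fin (2 * k) → ℝ)).symm (A *ᵥ (WithLp.equiv 2 _ x)) := rfl
  rw [hx, EuclideanSpace.norm_eq, EuclideanSpace.norm_eq]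
  apply le_of_eq
  congr 1
  simp only [WithLp.equiv_symm_apply, PiLp.toLp_apply, mulVec_pairSwap hA]
  exact Fintype.sum_equiv (pairSwapEquiv k) _ _ (fun i => rfl)

lemma range_shift (N : ℕ) (z : ℕ → ℝ) :
    ∑ m ∈ Finset.range N, z (m + 1) = ∑ m ∈ Finset.Icc 1 N, z m := by
  induction N with
  | zero => simp
  | succ n ih =>
    rw [Finset.sum_range_succ, ih]
    have : Finset.Icc 1 (n + 1) = insert (n + 1) (Finset.Icc 1 n) := by
      ext x
      simp only [Finset.mem_Icc, Finset.mem_insert]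
      omega
    rw [this, Finset.sum_insert (by simp)]
    ring

lemma double_sum (k : ℕ) (hk : 0 < k) (z : ℕ → ℝ) :
    ∑ i : Fin (2 * k), ∑ j : Fin (2 * k),
      (if (i : ℕ) + 1 = (j : ℕ) then z ((i : ℕ) + 1)
        else if (j : ℕ) + 1 = (i : ℕ) then z ((j : ℕ) + 1) else 0)
      = 2 * ∑ m ∈ Finset.Icc 1 (2 * k - 1), z m := by
  have hsplit : ∀ i j : Fin (2 * k),
      (if (i : ℕ) + 1 = (j : ℕ) then z ((i : ℕ) + 1)
        else if (j : ℕ) + 1 = (i : ℕ) then z ((j : ℕ) + 1) else 0)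
      = (if (i : ℕ) + 1 = (j : ℕ) then z ((i : ℕ) + 1) else 0)
        + (if (j : ℕ) + 1 = (i : ℕ) then z ((j : ℕ) + 1) else 0) := by
    intro i j
    split_ifs with h1 h2 <;> first | (exfalso; omega) | ring
  simp only [hsplit, Finset.sum_add_distrib]
  have hcomm : (∑ i : Fin (2 * k), ∑ j : Fin (2 * k),
        (if (j : ℕ) + 1 = (i : ℕ) then z ((j : ℕ) + 1) else 0))
      = ∑ j : Fin (2 * k), ∑ i : Fin (2 * k),
        (if (j : ℕ) + 1 = (i : ℕ) then z ((j : ℕ) + 1) else 0) := Finset.sum_comm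
  have hT : (∑ i : Fin (2 * k), ∑ j : Fin (2 * k),
      (if (i : ℕ) + 1 = (j : ℕ) then z ((i : ℕ) + 1) else 0))
      = ∑ m ∈ Finset.Icc 1 (2 * k - 1), z m := by
    have hinner : ∀ i : Fin (2 * k),
        (∑ j : Fin (2 * k), (if (i : ℕ) + 1 = (j : ℕ) then z ((i : ℕ) + 1) else 0))
        = if (i : ℕ) + 1 < 2 * k then z ((i : ℕ) + 1) else 0 := by
      intro i
      rw [Fin.sum_univ_eq_sum_range (fun m => if (i : ℕ) + 1 = m then z ((i : ℕ) + 1) else 0)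
        (2 * k), Finset.sum_ite_eq]
      simp [Finset.mem_range]
    simp only [hinner]
    rw [Fin.sum_univ_eq_sum_range (fun m => if m + 1 < 2 * k then z (m + 1) else 0) (2 * k)]
    obtain ⟨N, hN⟩ : ∃ N, 2 * k = N + 1 := ⟨2 * k - 1, by omega⟩
    rw [hN, Finset.sum_range_succ, if_neg (by omega), add_zero]
    have : ∀ m ∈ Finset.range N, (if m + 1 < N + 1 then z (m + 1) else 0) = z (m + 1) := by
      intro m hm
      rw [if_pos (by simp only [Finset.mem_range] at hm; omega)]
    rw [Finset.sum_congr rfl this, range_shift]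
    have hN2 : N = 2 * k - 1 := by omega
    rw [hN2]
    simp
  rw [hcomm, hT]
  ring

/-- Uniform-weight even path: for `n = 2k`, the maximum of `z₁ + ⋯ + z_{n-1}` over
nonnegative `z` with `‖L(z)‖ ≤ 1` (where `L(z)` is symmetric tridiagonal with zero
diagonal and superdiagonal `z₁, …, z_{n-1}`, 1-indexed) equals `k`, attained at
`z_j = 1` for `j` odd and `z_j = 0` for `j` even. -/
theorem uniform_even_path_distance (k : ℕ) (hk : 0 < k)
    (L : (ℕ → ℝ) → Matrix (Fin (2 * k)) (Fin (2 * k)) ℝ)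
    (hL : L = fun z => Matrix.of fun i j : Fin (2 * k) =>
      if (i : ℕ) + 1 = (j : ℕ) then z ((i : ℕ) + 1)
      else if (j : ℕ) + 1 = (i : ℕ) then z ((j : ℕ) + 1) else 0) :
    IsGreatest {s : ℝ | ∃ z : ℕ → ℝ,
        (∀ i ∈ Finset.Icc 1 (2 * k - 1), 0 ≤ z i) ∧ ‖L z‖ ≤ 1 ∧
        s = ∑ i ∈ Finset.Icc 1 (2 * k - 1), z i} (k : ℝ)
    ∧ ((∀ i ∈ Finset.Icc 1 (2 * k - 1), 0 ≤ (if Odd i then (1 : ℝ) else 0)) ∧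
        ‖L (fun i => if Odd i then (1 : ℝ) else 0)‖ ≤ 1 ∧
        (k : ℝ) = ∑ i ∈ Finset.Icc 1 (2 * k - 1), (if Odd i then (1 : ℝ) else 0)) := by
  have hnorm : ‖L (fun i => if Odd i then (1 : ℝ) else 0)‖ ≤ 1 := by
    apply norm_pairSwap_le k
    intro i j
    rw [hL]
    simpa using entry_eq k i j
  have hnonneg : ∀ i ∈ Finset.Icc 1 (2 * k - 1), 0 ≤ (if Odd i then (1 : ℝ) else 0) := by
    intro i _
    split_ifs <;> norm_num
  have hsum : (k : ℝ) = ∑ i ∈ Finset.Icc 1 (2 * k - 1), (if Odd i then (1 : ℝ) else 0) :=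
    (sum_indicator_odd k).symm
  -- upper bound
  have hub : ∀ s ∈ {s : ℝ | ∃ z : ℕ → ℝ,
      (∀ i ∈ Finset.Icc 1 (2 * k - 1), 0 ≤ z i) ∧ ‖L z‖ ≤ 1 ∧
      s = ∑ i ∈ Finset.Icc 1 (2 * k - 1), z i}, s ≤ (k : ℝ) := by
    rintro s ⟨z, hz0, hzn, rfl⟩
    set B := L z with hB
    set v : EuclideanSpace ℝ (Fin (2 * k)) := (WithLp.equiv 2 (Fin (2 * k) → ℝ)).symm
      (fun _ => 1) with hv
    have hvnorm : ‖v‖ = Real.sqrt (2 * k) := by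
      rw [EuclideanSpace.norm_eq]
      congr 1
      simp [hv]
    have h1 : ‖(EuclideanSpace.equiv (Fin (2 * k)) ℝ).symm (B *ᵥ v)‖ ≤ ‖B‖ * ‖v‖ :=
      Matrix.l2_opNorm_mulVec B v
    have h2 := real_inner_le_norm ((EuclideanSpace.equiv (Fin (2 * k)) ℝ).symm (B *ᵥ v)) v
    have h3 : ⟪(EuclideanSpace.equiv (Fin (2 * k)) ℝ).symm (B *ᵥ v), v⟫
        = ∑ i : Fin (2 * k), ∑ j : Fin (2 * k), B i j := by
      rw [PiLp.inner_apply]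
      simp only [RCLike.inner_apply, starRingEnd_apply, star_trivial]
      apply Finset.sum_congr rfl
      intro i _
      have : v i = 1 := rfl
      simp only [this, mul_one, one_mul]
      rw [show (EuclideanSpace.equiv (Fin (2 * k)) ℝ).symm (B *ᵥ v) i
          = ∑ j : Fin (2 * k), B i j * v j from rfl]
      exact Finset.sum_congr rfl fun j _ => by
        have hvj : v j = 1 := rfl
        rw [hvj, mul_one]
    have h4 : ∑ i : Fin (2 * k), ∑ j : Fin (2 * k), B i j
        = 2 * ∑ m ∈ Finset.Icc 1 (2 * k - 1), z m := by
      rw [hB, hL]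
      exact double_sum k hk z
    have hchain : 2 * ∑ m ∈ Finset.Icc 1 (2 * k - 1), z m ≤ 2 * k := by
      calc 2 * ∑ m ∈ Finset.Icc 1 (2 * k - 1), z m
          = ⟪(EuclideanSpace.equiv (Fin (2 * k)) ℝ).symm (B *ᵥ v), v⟫ := by rw [h3, h4]
        _ ≤ ‖(EuclideanSpace.equiv (Fin (2 * k)) ℝ).symm (B *ᵥ v)‖ * ‖v‖ := h2
        _ ≤ (‖B‖ * ‖v‖) * ‖v‖ := by
            apply mul_le_mul_of_nonneg_right h1 (norm_nonneg _)
        _ ≤ (1 * ‖v‖) * ‖v‖ := by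
            apply mul_le_mul_of_nonneg_right _ (norm_nonneg _)
            exact mul_le_mul_of_nonneg_right hzn (norm_nonneg _)
        _ = ‖v‖ * ‖v‖ := by ring
        _ = 2 * k := by
            rw [hvnorm, ← Real.sqrt_mul_self (by positivity : (0:ℝ) ≤ 2 * k)]
            rw [Real.sqrt_mul_self (by positivity : (0:ℝ) ≤ 2 * k)]
            exact Real.mul_self_sqrt (by positivity)
    linarith
  exact ⟨⟨⟨fun i => if Odd i then (1 : ℝ) else 0, hnonneg, hnorm, hsum⟩, hub⟩,
    hnonneg, hnorm, hsum⟩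
end

section
/- Let d_1, d_2, d_3 > 0 with d_2² > d_1 d_3, and let D ∈ M_4(ℝ) be symmetric tridiagonal with zero diagonal and superdiagonal (d_1, d_2, d_3). Then max{a_1 − a_4 : A = diag(a_1,…,a_4), ‖AD − DA‖ ≤ 1} = 1/d_1 + 1/d_3. -/
open Matrix
open scoped Matrix.Norms.L2Operator

private lemma path4_sqle (L B : ℝ) (h : L^2 ≤ B^2) (h2 : 0 < L + B) : L ≤ B := by nlinarith

private lemma path4_helper (C : Matrix (Fin 4) (Fin 4) ℝ) (h : ‖C‖ ≤ 1) (v : Fin 4 → ℝ) :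
    ∑ i, ((C *ᵥ v) i)^2 ≤ ∑ i, (v i)^2 := by
  have h0 := C.l2_opNorm_mulVec ((EuclideanSpace.equiv (Fin 4) ℝ).symm v)
  have hn : ‖(EuclideanSpace.equiv (Fin 4) ℝ).symm v‖ = Real.sqrt (∑ i, (v i)^2) := by
    rw [EuclideanSpace.norm_eq]
    simp [sq_abs]
  have hm : ‖(EuclideanSpace.equiv (Fin 4) ℝ).symm (C *ᵥ (EuclideanSpace.equiv (Fin 4) ℝ).symm v)‖
      = Real.sqrt (∑ i, ((C *ᵥ v) i)^2) := by
    rw [EuclideanSpace.norm_eq]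
    simp [sq_abs]
  rw [hn, hm] at h0
  have h1 : Real.sqrt (∑ i, ((C *ᵥ v) i)^2) ≤ Real.sqrt (∑ i, (v i)^2) := by
    calc Real.sqrt (∑ i, ((C *ᵥ v) i)^2) ≤ ‖C‖ * Real.sqrt (∑ i, (v i)^2) := h0
    _ ≤ 1 * Real.sqrt (∑ i, (v i)^2) := by
        apply mul_le_mul_of_nonneg_right h (Real.sqrt_nonneg _)
    _ = _ := one_mul _
  exact (Real.sqrt_le_sqrt_iff (by positivity)).mp h1

private lemma path4_alg (d₁ d₂ d₃ t1 t2 t3 : ℝ) (h₁ : 0 < d₁) (h₂ : 0 < d₂) (h₃ : 0 < d₃)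
    (hcond : d₂^2 > d₁*d₃)
    (F1 : t1^2 + t2^2 ≤ 1) (F2 : t2^2 + t3^2 ≤ 1)
    (F3 : t2^2 + (t3*(1-t1^2))^2 ≤ (t1*t2)^2 + (1-t1^2)^2) :
    t1*d₂*d₃ + t2*d₁*d₃ + t3*d₁*d₂ ≤ d₂*d₃ + d₁*d₂ := by
  have ht1le : t1 ≤ 1 := by nlinarith [sq_nonneg t2]
  have ht3le : t3 ≤ 1 := by nlinarith [sq_nonneg t2]
  have ht1ge : -1 ≤ t1 := by nlinarith [sq_nonneg t2]
  have ht3ge : -1 ≤ t3 := by nlinarith [sq_nonneg t2]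
  have hu : (0:ℝ) ≤ 1 - t1 := by linarith
  have hw : (0:ℝ) ≤ 1 - t3 := by linarith
  rcases le_or_gt t2 0 with ht2 | ht2
  · nlinarith [mul_nonneg (sub_nonneg.mpr ht1le) (mul_pos h₂ h₃).le,
      mul_nonneg (sub_nonneg.mpr ht3le) (mul_pos h₁ h₂).le,
      mul_nonpos_of_nonpos_of_nonneg ht2 (mul_pos h₁ h₃).le]
  · have ht1lt : t1^2 < 1 := by nlinarith
    have hp : 0 < 1 - t1^2 := by linarith
    have key : t2^2 ≤ (1-t1^2)*(1-t3^2) := by nlinarith [F3, hp, mul_pos hp hp]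
    have h4 : (0:ℝ) ≤ (1-t1)*(1-t3) * (4 - (1+t1)*(1+t3)) := by
      apply mul_nonneg (mul_nonneg hu hw); nlinarith
    have key4 : t2^2 ≤ 4*((1-t1)*(1-t3)) := by nlinarith [key, h4]
    have s1 : t2^2*(d₁*d₃)^2 ≤ 4*((1-t1)*(1-t3))*(d₁*d₃)^2 :=
      mul_le_mul_of_nonneg_right key4 (by positivity)
    have s2 : 4*((1-t1)*(1-t3))*(d₁*d₃)^2 ≤ 4*((1-t1)*(1-t3))*(d₁*d₃)*d₂^2 := by
      linarith [mul_nonneg (by positivity : (0:ℝ) ≤ 4*((1-t1)*(1-t3))*(d₁*d₃))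
        (sub_nonneg.mpr hcond.le)]
    have s3 : 4*((1-t1)*(1-t3))*(d₁*d₃)*d₂^2 ≤ ((1-t1)*d₃+(1-t3)*d₁)^2*d₂^2 := by
      linarith [mul_nonneg (sq_nonneg ((1-t1)*d₃ - (1-t3)*d₁)) (sq_nonneg d₂)]
    have hsq := s1.trans (s2.trans s3)
    have hsq' : (t2*(d₁*d₃))^2 ≤ (d₂*((1-t1)*d₃+(1-t3)*d₁))^2 := by
      ring_nf; ring_nf at hsq; linarith
    have hLB : 0 < t2*(d₁*d₃) + d₂*((1-t1)*d₃+(1-t3)*d₁) := by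
      have h5 := mul_pos ht2 (mul_pos h₁ h₃)
      have h6 : 0 ≤ d₂*((1-t1)*d₃+(1-t3)*d₁) := by positivity
      linarith
    have final := path4_sqle _ _ hsq' hLB
    linarith [final]

/-- For the path on 4 vertices with weights `d₁, d₂, d₃ > 0` satisfying `d₂² > d₁d₃`,
the noncommutative distance `max{a₁ − a₄ : ‖AD − DA‖ ≤ 1}` equals `1/d₁ + 1/d₃`. -/
theorem path4_distance_reducible (d₁ d₂ d₃ : ℝ)
    (h₁ : 0 < d₁) (h₂ : 0 < d₂) (h₃ : 0 < d₃) (hcond : d₂ ^ 2 > d₁ * d₃)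
    (D : Matrix (Fin 4) (Fin 4) ℝ)
    (hD : D = !![0, d₁, 0, 0; d₁, 0, d₂, 0; 0, d₂, 0, d₃; 0, 0, d₃, 0]) :
    IsGreatest {r : ℝ | ∃ a : Fin 4 → ℝ,
        ‖Matrix.diagonal a * D - D * Matrix.diagonal a‖ ≤ 1 ∧ r = a 0 - a 3}
      (1 / d₁ + 1 / d₃) := by
  constructor
  · -- membership
    refine ⟨![1/d₁ + 1/d₃, 1/d₃, 1/d₃, 0], ?_, by norm_num; show _ = _ - (0:ℝ); simp⟩
    have hC : Matrix.diagonal ![1/d₁ + 1/d₃, 1/d₃, 1/d₃, 0] * D -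
        D * Matrix.diagonal ![1/d₁ + 1/d₃, 1/d₃, 1/d₃, 0]
        = !![0,1,0,0; -1,0,0,0; 0,0,0,1; 0,0,-1,0] := by
      subst hD
      ext i j
      rw [Matrix.sub_apply, Matrix.diagonal_mul, Matrix.mul_diagonal]
      fin_cases i <;> fin_cases j <;>
        simp [Matrix.vecHead, Matrix.vecTail] <;> field_simp <;> ring
    rw [hC]
    set C0 : Matrix (Fin 4) (Fin 4) ℝ := !![0,1,0,0; -1,0,0,0; 0,0,0,1; 0,0,-1,0] with hC0
    have hCC : C0ᴴ * C0 = 1 := by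
      rw [hC0]
      ext i j
      rw [Matrix.mul_apply, Fin.sum_univ_four]
      fin_cases i <;> fin_cases j <;>
        simp [Matrix.conjTranspose_apply, Matrix.one_apply, Matrix.vecHead, Matrix.vecTail]
    have hone : ‖(1 : Matrix (Fin 4) (Fin 4) ℝ)‖ = 1 := by
      rw [Matrix.cstar_norm_def, _root_.map_one]
      exact norm_one
    have hsq : ‖C0‖ * ‖C0‖ = 1 := by
      rw [← Matrix.l2_opNorm_conjTranspose_mul_self, hCC, hone]
    have hnn : 0 ≤ ‖C0‖ := norm_nonneg _
    have : (‖C0‖ - 1) * (‖C0‖ + 1) = 0 := by ring_nf; linarith [hsq]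
    rcases mul_eq_zero.mp this with h | h
    · linarith
    · linarith
  · -- upper bound
    rintro r ⟨a, hnorm, hra⟩
    set t1 : ℝ := (a 0 - a 1) * d₁ with e1
    set t2 : ℝ := (a 1 - a 2) * d₂ with e2
    set t3 : ℝ := (a 2 - a 3) * d₃ with e3
    have hC : Matrix.diagonal a * D - D * Matrix.diagonal a
        = !![0,t1,0,0; -t1,0,t2,0; 0,-t2,0,t3; 0,0,-t3,0] := by
      subst hD
      ext i j
      rw [Matrix.sub_apply, Matrix.diagonal_mul, Matrix.mul_diagonal]
      fin_cases i <;> fin_cases j <;>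
        simp [Matrix.vecHead, Matrix.vecTail, e1, e2, e3] <;> ring
    rw [hC] at hnorm
    have F1 : t1^2 + t2^2 ≤ 1 := by
      have h1 := path4_helper _ hnorm ![0,1,0,0]
      simp [Matrix.mulVec, dotProduct, Fin.sum_univ_four,
        Matrix.vecHead, Matrix.vecTail] at h1
      linarith [h1]
    have F2 : t2^2 + t3^2 ≤ 1 := by
      have h1 := path4_helper _ hnorm ![0,0,1,0]
      simp [Matrix.mulVec, dotProduct, Fin.sum_univ_four,
        Matrix.vecHead, Matrix.vecTail] at h1
      linarith [h1]
    have F3 : t2^2 + (t3*(1-t1^2))^2 ≤ (t1*t2)^2 + (1-t1^2)^2 := by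
      have h1 := path4_helper _ hnorm ![-(t1*t2), 0, 1 - t1^2, 0]
      simp [Matrix.mulVec, dotProduct, Fin.sum_univ_four,
        Matrix.vecHead, Matrix.vecTail] at h1
      nlinarith [h1, sq_nonneg t1, sq_nonneg t2]
    have P := path4_alg d₁ d₂ d₃ t1 t2 t3 h₁ h₂ h₃ hcond F1 F2 F3
    have expand : (a 0 - a 3) * (d₁*d₂*d₃) = t1*d₂*d₃ + t2*d₁*d₃ + t3*d₁*d₂ := by
      rw [e1, e2, e3]; ring
    rw [hra]
    have goal2 : ((a 0 - a 3) * (d₁*d₃)) * d₂ ≤ (d₃ + d₁) * d₂ := by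
      have : ((a 0 - a 3) * (d₁*d₃)) * d₂ = (a 0 - a 3) * (d₁*d₂*d₃) := by ring
      rw [this, expand]; linarith [P]
    have goal3 : (a 0 - a 3) * (d₁*d₃) ≤ d₃ + d₁ := le_of_mul_le_mul_right goal2 h₂
    rw [div_add_div _ _ h₁.ne' h₃.ne', le_div_iff₀ (mul_pos h₁ h₃)]
    linarith [goal3]
end

section
/- Let d_1, d_2, d_3 > 0 with d_2² ≤ d_1 d_3, and let D ∈ M_4(ℝ) be symmetric tridiagonal with zero diagonal and superdiagonal (d_1, d_2, d_3). Then max{a_1 − a_4 : A = diag(a_1,…,a_4), ‖AD − DA‖ ≤ 1} = (1/d_1)·√(1 + (d_1/d_2)²)·√(1 + (d_2/d_3)²). -/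
open Matrix
open scoped Matrix.Norms.L2Operator RealInnerProductSpace

private lemma quad_nonneg' (A B t x y : ℝ) (hA : 0 ≤ A) (hB : 0 ≤ B) (h : t^2 = A*B) :
    0 ≤ A*x^2 + 2*t*(x*y) + B*y^2 := by
  rcases eq_or_lt_of_le hA with hA0 | hA0
  · have ht : t = 0 := by nlinarith [sq_nonneg t]
    rw [ht, ← hA0]
    nlinarith [sq_nonneg y]
  · nlinarith [sq_nonneg (A*x + t*y)]

private lemma comm_eq' (d₁ d₂ d₃ : ℝ) (a : Fin 4 → ℝ) :
    Matrix.diagonal a * !![0, d₁, 0, 0; d₁, 0, d₂, 0; 0, d₂, 0, d₃; 0, 0, d₃, 0]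
      - !![0, d₁, 0, 0; d₁, 0, d₂, 0; 0, d₂, 0, d₃; 0, 0, d₃, 0] * Matrix.diagonal a
    = !![0, (a 0 - a 1)*d₁, 0, 0;
         -((a 0 - a 1)*d₁), 0, (a 1 - a 2)*d₂, 0;
         0, -((a 1 - a 2)*d₂), 0, (a 2 - a 3)*d₃;
         0, 0, -((a 2 - a 3)*d₃), 0] := by
  ext i j
  fin_cases i <;> fin_cases j <;>
    simp [Matrix.mul_apply, Fin.sum_univ_four, Matrix.diagonal, Matrix.vecHead,
      Matrix.vecTail, Function.comp, Fin.succ] <;> ring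

private lemma norm_le_one_tridiag' (c₁ c₂ c₃ : ℝ) (h1 : c₁^2 ≤ 1) (h3 : c₃^2 ≤ 1)
    (h2 : c₂^2 = (1-c₁^2)*(1-c₃^2)) :
    ‖(!![0, c₁, 0, 0; -c₁, 0, c₂, 0; 0, -c₂, 0, c₃; 0, 0, -c₃, 0] :
        Matrix (Fin 4) (Fin 4) ℝ)‖ ≤ 1 := by
  set C : Matrix (Fin 4) (Fin 4) ℝ := !![0, c₁, 0, 0; -c₁, 0, c₂, 0; 0, -c₂, 0, c₃; 0, 0, -c₃, 0]
    with hC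
  rw [Matrix.l2_opNorm_def]
  refine ContinuousLinearMap.opNorm_le_bound _ zero_le_one fun x => ?_
  rw [one_mul]
  have hx : ((Matrix.toEuclideanLin.trans LinearMap.toContinuousLinearMap) C) x
      = (WithLp.equiv 2 (Fin 4 → ℝ)).symm (C *ᵥ (WithLp.equiv 2 (Fin 4 → ℝ) x)) := rfl
  rw [hx, EuclideanSpace.norm_eq, EuclideanSpace.norm_eq]
  apply Real.sqrt_le_sqrt
  set w : Fin 4 → ℝ := WithLp.equiv 2 (Fin 4 → ℝ) x with hw
  have hxw : ∀ i, x i = w i := fun i => rfl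
  simp only [WithLp.equiv_symm_apply, PiLp.toLp_apply, Real.norm_eq_abs, sq_abs, hxw]
  rw [Fin.sum_univ_four, Fin.sum_univ_four]
  have hmv : ∀ i, (C *ᵥ w) i = C i 0 * w 0 + C i 1 * w 1 + C i 2 * w 2 + C i 3 * w 3 := by
    intro i; simp [Matrix.mulVec, dotProduct, Fin.sum_univ_four]
  simp only [hmv, hC]
  norm_num [Matrix.cons_val_two, Matrix.cons_val_three, Matrix.vecHead, Matrix.vecTail, show (Fin.succ 2 : Fin 4) = 3 from rfl]
  have q1 : 0 ≤ (1-c₁^2)*(w 0)^2 + 2*(c₁*c₂)*((w 0)*(w 2)) + (c₁^2*(1-c₃^2))*(w 2)^2 := by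
    apply quad_nonneg' _ _ _ _ _ (by linarith) (by nlinarith) (by linear_combination c₁^2 * h2)
  have q2 : 0 ≤ (c₃^2*(1-c₁^2))*(w 1)^2 + 2*(c₂*c₃)*((w 1)*(w 3)) + (1-c₃^2)*(w 3)^2 := by
    apply quad_nonneg' _ _ _ _ _ (by nlinarith) (by linarith) (by linear_combination c₃^2 * h2)
  nlinarith [q1, q2, h2]

set_option maxHeartbeats 1000000 in
/-- For the path on 4 vertices with weights `d₁, d₂, d₃ > 0` satisfying `d₂² ≤ d₁d₃`,
the noncommutative distance `max{a₁ − a₄ : ‖AD − DA‖ ≤ 1}` equals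
`(1/d₁)·√(1 + (d₁/d₂)²)·√(1 + (d₂/d₃)²)`. -/
theorem path4_distance_irreducible (d₁ d₂ d₃ : ℝ)
    (h₁ : 0 < d₁) (h₂ : 0 < d₂) (h₃ : 0 < d₃) (hcond : d₂ ^ 2 ≤ d₁ * d₃)
    (D : Matrix (Fin 4) (Fin 4) ℝ)
    (hD : D = !![0, d₁, 0, 0; d₁, 0, d₂, 0; 0, d₂, 0, d₃; 0, 0, d₃, 0]) :
    IsGreatest {r : ℝ | ∃ a : Fin 4 → ℝ,
        ‖Matrix.diagonal a * D - D * Matrix.diagonal a‖ ≤ 1 ∧ r = a 0 - a 3}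
      ((1 / d₁) * Real.sqrt (1 + (d₁ / d₂) ^ 2) * Real.sqrt (1 + (d₂ / d₃) ^ 2)) := by
  subst hD
  set P : ℝ := Real.sqrt (1 + (d₁ / d₂) ^ 2) with hPdef
  set Q : ℝ := Real.sqrt (1 + (d₂ / d₃) ^ 2) with hQdef
  have hP0 : 0 < P := Real.sqrt_pos.mpr (by positivity)
  have hQ0 : 0 < Q := Real.sqrt_pos.mpr (by positivity)
  have hP2 : P^2 = 1 + (d₁/d₂)^2 := Real.sq_sqrt (by positivity)
  have hQ2 : Q^2 = 1 + (d₂/d₃)^2 := Real.sq_sqrt (by positivity)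
  have hP2' : d₂^2 * P^2 = d₂^2 + d₁^2 := by rw [hP2]; field_simp
  have hQ2' : d₃^2 * Q^2 = d₃^2 + d₂^2 := by rw [hQ2]; field_simp
  have h4 : d₂^2 * d₂^2 ≤ (d₁*d₃) * (d₁*d₃) :=
    mul_le_mul hcond hcond (by positivity) (by positivity)
  have hQP : Q ≤ P := by
    apply Real.sqrt_le_sqrt
    rw [div_pow, div_pow]
    have : d₂^2/d₃^2 ≤ d₁^2/d₂^2 := by
      rw [div_le_div_iff₀ (by positivity) (by positivity)]; nlinarith
    linarith
  constructor
  · -- membership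
    have key : d₁^2*d₃^2*Q^2 - d₂^4*P^2 = d₂^2*d₃^2*(P^2-Q^2) := by
      linear_combination (d₁^2+d₂^2)*hQ2' - (d₂^2+d₃^2)*hP2'
    have hc1sq : (Q/P)^2 ≤ 1 := by
      rw [div_pow, div_le_one (by positivity)]
      exact pow_le_pow_left₀ hQ0.le hQP 2
    have hc3sq : (d₂^2*P/(d₁*d₃*Q))^2 ≤ 1 := by
      rw [div_pow, div_le_one (by positivity)]
      nlinarith [hP2', hQ2', h4]
    have hc2sq : (d₂*(P^2-Q^2)/(d₁*P*Q))^2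
        = (1-(Q/P)^2)*(1-(d₂^2*P/(d₁*d₃*Q))^2) := by
      have f1 : 1 - (Q/P)^2 = (P^2-Q^2)/P^2 := by
        field_simp
      have f3 : 1 - (d₂^2*P/(d₁*d₃*Q))^2 = d₂^2*d₃^2*(P^2-Q^2)/(d₁^2*d₃^2*Q^2) := by
        rw [div_pow, ← key, mul_pow, mul_pow]
        field_simp
      rw [f1, f3, div_mul_div_comm, div_pow,
        div_eq_div_iff (by positivity) (by positivity)]
      ring
    have hN := norm_le_one_tridiag' _ _ _ hc1sq hc3sq hc2sq
    refine ⟨![Q/(d₁*P) + (P^2-Q^2)/(d₁*P*Q) + d₂^2*P/(d₁*d₃^2*Q), (P^2-Q^2)/(d₁*P*Q) + d₂^2*P/(d₁*d₃^2*Q), d₂^2*P/(d₁*d₃^2*Q), (0:ℝ)], ?_, ?_⟩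
    · rw [comm_eq']
      have e1 : (![Q/(d₁*P) + (P^2-Q^2)/(d₁*P*Q) + d₂^2*P/(d₁*d₃^2*Q), (P^2-Q^2)/(d₁*P*Q) + d₂^2*P/(d₁*d₃^2*Q), d₂^2*P/(d₁*d₃^2*Q), (0:ℝ)] 0 - ![Q/(d₁*P) + (P^2-Q^2)/(d₁*P*Q) + d₂^2*P/(d₁*d₃^2*Q), (P^2-Q^2)/(d₁*P*Q) + d₂^2*P/(d₁*d₃^2*Q), d₂^2*P/(d₁*d₃^2*Q), (0:ℝ)] 1) * d₁ = Q/P := by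
        simp only [Matrix.cons_val, Matrix.cons_val_zero, Matrix.cons_val_one, Matrix.cons_val_two, Matrix.cons_val_three, Matrix.head_cons, Matrix.tail_cons, Matrix.vecHead, Matrix.vecTail, Function.comp_apply, Matrix.cons_val_succ]
        field_simp
        ring
      have e2 : (![Q/(d₁*P) + (P^2-Q^2)/(d₁*P*Q) + d₂^2*P/(d₁*d₃^2*Q), (P^2-Q^2)/(d₁*P*Q) + d₂^2*P/(d₁*d₃^2*Q), d₂^2*P/(d₁*d₃^2*Q), (0:ℝ)] 1 - ![Q/(d₁*P) + (P^2-Q^2)/(d₁*P*Q) + d₂^2*P/(d₁*d₃^2*Q), (P^2-Q^2)/(d₁*P*Q) + d₂^2*P/(d₁*d₃^2*Q), d₂^2*P/(d₁*d₃^2*Q), (0:ℝ)] 2) * d₂ = d₂*(P^2-Q^2)/(d₁*P*Q) := by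
        simp only [Matrix.cons_val, Matrix.cons_val_zero, Matrix.cons_val_one, Matrix.cons_val_two, Matrix.cons_val_three, Matrix.head_cons, Matrix.tail_cons, Matrix.vecHead, Matrix.vecTail, Function.comp_apply, Matrix.cons_val_succ]
        field_simp
        ring
      have e3 : (![Q/(d₁*P) + (P^2-Q^2)/(d₁*P*Q) + d₂^2*P/(d₁*d₃^2*Q), (P^2-Q^2)/(d₁*P*Q) + d₂^2*P/(d₁*d₃^2*Q), d₂^2*P/(d₁*d₃^2*Q), (0:ℝ)] 2 - ![Q/(d₁*P) + (P^2-Q^2)/(d₁*P*Q) + d₂^2*P/(d₁*d₃^2*Q), (P^2-Q^2)/(d₁*P*Q) + d₂^2*P/(d₁*d₃^2*Q), d₂^2*P/(d₁*d₃^2*Q), (0:ℝ)] 3) * d₃ = d₂^2*P/(d₁*d₃*Q) := by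
        simp only [Matrix.cons_val, Matrix.cons_val_zero, Matrix.cons_val_one, Matrix.cons_val_two, Matrix.cons_val_three, Matrix.head_cons, Matrix.tail_cons, Matrix.vecHead, Matrix.vecTail, Function.comp_apply, Matrix.cons_val_succ]
        field_simp
        ring
      rw [e1, e2, e3]
      exact hN
    · simp only [Matrix.cons_val, Matrix.cons_val_zero, Matrix.cons_val_one, Matrix.cons_val_two, Matrix.cons_val_three, Matrix.head_cons, Matrix.tail_cons, Matrix.vecHead, Matrix.vecTail, Function.comp_apply, Matrix.cons_val_succ]
      field_simp
      ring_nf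
      linear_combination P^2 * hQ2'
  · -- upper bound
    rintro r ⟨a, hnorm, rfl⟩
    set x : EuclideanSpace ℝ (Fin 4) := (WithLp.equiv 2 (Fin 4 → ℝ)).symm ![1/d₁, 0, -(1/d₂), 0]
      with hxdef
    set y : EuclideanSpace ℝ (Fin 4) := (WithLp.equiv 2 (Fin 4 → ℝ)).symm ![0, 1, 0, -(d₂/d₃)]
      with hydef
    have hny : ‖y‖ = Q := by
      rw [hydef, hQdef, EuclideanSpace.norm_eq]
      congr 1
      simp [Fin.sum_univ_four, WithLp.equiv_symm_apply, PiLp.toLp_apply]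
    have hnx : ‖x‖ = 1/d₁ * P := by
      rw [hxdef, EuclideanSpace.norm_eq]
      rw [show (1/d₁ * P) = Real.sqrt ((1/d₁*P)^2) from (Real.sqrt_sq (by positivity)).symm]
      congr 1
      simp [Fin.sum_univ_four, WithLp.equiv_symm_apply, PiLp.toLp_apply]
      field_simp
      linear_combination (-1) * hP2'
    set C : Matrix (Fin 4) (Fin 4) ℝ :=
      Matrix.diagonal a * !![0, d₁, 0, 0; d₁, 0, d₂, 0; 0, d₂, 0, d₃; 0, 0, d₃, 0]
        - !![0, d₁, 0, 0; d₁, 0, d₂, 0; 0, d₂, 0, d₃; 0, 0, d₃, 0] * Matrix.diagonal a with hCdef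
    have key := Matrix.l2_opNorm_mulVec C y
    have cs := real_inner_le_norm x ((EuclideanSpace.equiv (Fin 4) ℝ).symm (C *ᵥ y))
    have hinner : (inner ℝ x ((EuclideanSpace.equiv (Fin 4) ℝ).symm (C *ᵥ y)) : ℝ) = a 0 - a 3 := by
      rw [hCdef, comm_eq' d₁ d₂ d₃ a]
      simp [PiLp.inner_apply, RCLike.inner_apply, Fin.sum_univ_four, Matrix.mulVec,
        dotProduct, Matrix.vecHead, Matrix.vecTail, hxdef, hydef, WithLp.equiv_symm_apply, PiLp.toLp_apply]
      field_simp
      ring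
    have hCy : ‖(EuclideanSpace.equiv (Fin 4) ℝ).symm (C *ᵥ y)‖ ≤ ‖y‖ :=
      key.trans (by nlinarith [norm_nonneg y, hnorm])
    calc a 0 - a 3 = (inner ℝ x ((EuclideanSpace.equiv (Fin 4) ℝ).symm (C *ᵥ y)) : ℝ) := hinner.symm
      _ ≤ ‖x‖ * ‖(EuclideanSpace.equiv (Fin 4) ℝ).symm (C *ᵥ y)‖ := cs
      _ ≤ ‖x‖ * ‖y‖ := by nlinarith [norm_nonneg x, hCy]
      _ = 1/d₁ * P * Q := by rw [hnx, hny]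
end
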